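/- (Local embedding for p = 2.) There exists an absolute constant C > 0 such that for every Dirichlet polynomial P(s) = ∑_{n=1}^N a_n n^{-s} and every τ ∈ ℝ, ∫_τ^{τ+1} |∑_{n=1}^N a_n n^{-1/2 − it}|² dt ≤ C ∑_{n=1}^N |a_n|². -/

import Mathlib

set_option maxHeartbeats 1000000

open intervalIntegral Complex MeasureTheory Finset
noncomputable section


def ker (ξ : ℝ) : ℂ := ∫ u in (-2:ℝ)..2, ((2 - |u| : ℝ) : ℂ) * Complex.exp (Complex.I * ξ * u)

lemma norm_exp_I_mul (ξ u : ℝ) : ‖Complex.exp (Complex.I * ξ * u)‖ = 1 := by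
  rw [Complex.norm_exp]
  simp [Complex.mul_re]

lemma ker_cont (ξ : ℝ) : Continuous (fun u : ℝ => ((2 - |u| : ℝ) : ℂ) * Complex.exp (Complex.I * ξ * u)) := by
  apply Continuous.mul
  · exact Complex.continuous_ofReal.comp (by continuity)
  · exact Complex.continuous_exp.comp (by continuity)

lemma ker_norm_le_eight (ξ : ℝ) : ‖ker ξ‖ ≤ 8 := by
  have h := intervalIntegral.norm_integral_le_of_norm_le_const (C := 2)
    (f := fun u : ℝ => ((2 - |u| : ℝ) : ℂ) * Complex.exp (Complex.I * ξ * u))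
    (a := (-2:ℝ)) (b := 2) ?_
  · calc ‖ker ξ‖ ≤ 2 * |(2:ℝ) - (-2)| := h
      _ = 8 := by norm_num
  · intro u hu
    rw [Set.uIoc_of_le (by norm_num : (-2:ℝ) ≤ 2)] at hu
    rw [norm_mul, norm_exp_I_mul, mul_one, Complex.norm_real, Real.norm_eq_abs]
    have h2 : |u| ≤ 2 := by
      rw [abs_le]; exact ⟨le_of_lt hu.1, hu.2⟩
    have h3 := abs_nonneg u
    rw [abs_le]
    constructor <;> linarith

lemma ker_eq (ξ : ℝ) (hξ : ξ ≠ 0) :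
    ker ξ = (Complex.exp (Complex.I*ξ) - Complex.exp (-(Complex.I*ξ)))^2 / (Complex.I*ξ)^2 := by
  set k : ℂ := Complex.I * ξ with hk
  have hk0 : k ≠ 0 := by
    simp [hk, Complex.I_ne_zero, hξ, Complex.ofReal_eq_zero]
  have hknormsq : k^2 = -(ξ:ℂ)^2 := by rw [hk]; rw [mul_pow, Complex.I_sq]; ring
  have hi1 : IntervalIntegrable (fun u : ℝ => ((2 - |u| : ℝ) : ℂ) * Complex.exp (k * u)) volume (-2) 0 :=
    (ker_cont ξ).intervalIntegrable _ _
  have hi2 : IntervalIntegrable (fun u : ℝ => ((2 - |u| : ℝ) : ℂ) * Complex.exp (k * u)) volume 0 2 :=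
    (ker_cont ξ).intervalIntegrable _ _
  have hsplit : ker ξ = (∫ u in (-2:ℝ)..0, ((2 - |u| : ℝ) : ℂ) * Complex.exp (k * u))
      + ∫ u in (0:ℝ)..2, ((2 - |u| : ℝ) : ℂ) * Complex.exp (k * u) := by
    rw [ker, intervalIntegral.integral_add_adjacent_intervals hi1 hi2]
  clear_value k
  have hL : (∫ u in (-2:ℝ)..0, ((2 - |u| : ℝ) : ℂ) * Complex.exp (k * u))
      = ∫ u in (-2:ℝ)..0, ((2:ℂ) + u) * Complex.exp (k * u) := by
    apply intervalIntegral.integral_congr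
    intro u hu
    rw [Set.uIcc_of_le (by norm_num : (-2:ℝ) ≤ 0)] at hu
    show ((2 - |u| : ℝ) : ℂ) * Complex.exp (k * u) = _
    rw [_root_.abs_of_nonpos hu.2]
    push_cast
    ring_nf
  have hR : (∫ u in (0:ℝ)..2, ((2 - |u| : ℝ) : ℂ) * Complex.exp (k * u))
      = ∫ u in (0:ℝ)..2, ((2:ℂ) - u) * Complex.exp (k * u) := by
    apply intervalIntegral.integral_congr
    intro u hu
    rw [Set.uIcc_of_le (by norm_num : (0:ℝ) ≤ 2)] at hu
    show ((2 - |u| : ℝ) : ℂ) * Complex.exp (k * u) = _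
    rw [_root_.abs_of_nonneg hu.1]
    push_cast
    ring_nf
  have hexpd : ∀ z : ℂ, HasDerivAt (fun z : ℂ => Complex.exp (k * z)) (k * Complex.exp (k * z)) z := by
    intro z
    have h0 : HasDerivAt (fun z : ℂ => k * z) k z := by
      simpa using (hasDerivAt_id z).const_mul k
    have := h0.cexp
    simpa [mul_comm] using this
  have hG1 : ∀ z : ℂ, HasDerivAt (fun z : ℂ => (((2:ℂ) - z)/k + 1/k^2) * Complex.exp (k * z))
      (((2:ℂ) - z) * Complex.exp (k * z)) z := by
    intro z
    have h1 : HasDerivAt (fun z : ℂ => ((2:ℂ) - z)/k + 1/k^2) (-1/k) z := by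
      have h := (((hasDerivAt_id z).const_sub (2:ℂ)).div_const k).add_const (1/k^2)
      exact h
    have := h1.mul (hexpd z)
    refine this.congr_deriv ?_
    field_simp
    ring
  have hG2 : ∀ z : ℂ, HasDerivAt (fun z : ℂ => (((2:ℂ) + z)/k - 1/k^2) * Complex.exp (k * z))
      (((2:ℂ) + z) * Complex.exp (k * z)) z := by
    intro z
    have h1 : HasDerivAt (fun z : ℂ => ((2:ℂ) + z)/k - 1/k^2) (1/k) z := by
      have h := (((hasDerivAt_id z).const_add (2:ℂ)).div_const k).sub_const (1/k^2)
      exact h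
    have := h1.mul (hexpd z)
    refine this.congr_deriv ?_
    field_simp
    ring
  have hRval : (∫ u in (0:ℝ)..2, ((2:ℂ) - u) * Complex.exp (k * u))
      = ((((2:ℂ) - (2:ℝ))/k + 1/k^2) * Complex.exp (k * (2:ℝ))) - (((2:ℂ) - (0:ℝ))/k + 1/k^2) * Complex.exp (k * (0:ℝ)) := by
    exact intervalIntegral.integral_eq_sub_of_hasDerivAt
      (f := fun u : ℝ => (((2:ℂ) - u)/k + 1/k^2) * Complex.exp (k * u))
      (fun u _ => (hG1 u).comp_ofReal)
      ((Continuous.intervalIntegrable (by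
        apply Continuous.mul
        · exact continuous_const.sub Complex.continuous_ofReal
        · exact Complex.continuous_exp.comp (continuous_const.mul Complex.continuous_ofReal)) _ _))
  have hLval : (∫ u in (-2:ℝ)..0, ((2:ℂ) + u) * Complex.exp (k * u))
      = ((((2:ℂ) + (0:ℝ))/k - 1/k^2) * Complex.exp (k * (0:ℝ))) - (((2:ℂ) + (-2:ℝ))/k - 1/k^2) * Complex.exp (k * (-2:ℝ)) := by
    exact intervalIntegral.integral_eq_sub_of_hasDerivAt
      (f := fun u : ℝ => (((2:ℂ) + u)/k - 1/k^2) * Complex.exp (k * u))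
      (fun u _ => (hG2 u).comp_ofReal)
      ((Continuous.intervalIntegrable (by
        apply Continuous.mul
        · exact continuous_const.add Complex.continuous_ofReal
        · exact Complex.continuous_exp.comp (continuous_const.mul Complex.continuous_ofReal)) _ _))
  rw [hsplit, hL, hR, hRval, hLval]
  have hexp : Complex.exp (k*(2:ℝ)) = Complex.exp k ^ 2 := by
    rw [show k*((2:ℝ):ℂ) = (2:ℕ)*k by push_cast; ring, Complex.exp_nat_mul]
  have hexp2 : Complex.exp (k*((-2:ℝ):ℂ)) = (Complex.exp k)⁻¹ ^ 2 := by
    rw [show k*((-2:ℝ):ℂ) = (2:ℕ)*(-k) by push_cast; ring, Complex.exp_nat_mul, Complex.exp_neg]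
  have hen : Complex.exp (-k) = (Complex.exp k)⁻¹ := Complex.exp_neg k
  have hexpne : Complex.exp k ≠ 0 := Complex.exp_ne_zero k
  rw [hen, hexp, hexp2]
  push_cast
  rw [mul_zero, Complex.exp_zero]
  rw [eq_div_iff (pow_ne_zero 2 hk0)]
  have h1 : (cexp k)⁻¹ = 1 / cexp k := by rw [one_div]
  rw [h1]
  field_simp
  have e1 : k ^ 10 * k⁻¹ ^ 10 = 1 := by rw [← mul_pow, mul_inv_cancel₀ hk0, one_pow]
  have e2 : cexp k ^ 2 * (cexp k)⁻¹ ^ 2 = 1 := by rw [← mul_pow, mul_inv_cancel₀ hexpne, one_pow]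
  ring

lemma ker_norm_le_decay (ξ : ℝ) (hξ : ξ ≠ 0) : ‖ker ξ‖ ≤ 4 / ξ^2 := by
  rw [ker_eq ξ hξ, norm_div, norm_pow, norm_pow]
  have h1 : ‖Complex.I * (ξ:ℂ)‖ = |ξ| := by
    rw [norm_mul, Complex.norm_I, one_mul, Complex.norm_real]; rfl
  have h2 : ‖Complex.exp (Complex.I*ξ) - Complex.exp (-(Complex.I*ξ))‖ ≤ 2 := by
    have e1 : ‖Complex.exp (Complex.I*(ξ:ℂ))‖ = 1 := by
      rw [Complex.norm_exp]; simp [Complex.mul_re]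
    have e2 : ‖Complex.exp (-(Complex.I*(ξ:ℂ)))‖ = 1 := by
      rw [Complex.norm_exp]; simp [Complex.mul_re]
    calc ‖Complex.exp (Complex.I*ξ) - Complex.exp (-(Complex.I*ξ))‖
        ≤ ‖Complex.exp (Complex.I*(ξ:ℂ))‖ + ‖Complex.exp (-(Complex.I*(ξ:ℂ)))‖ := norm_sub_le _ _
      _ = 2 := by rw [e1, e2]; norm_num
  rw [h1, _root_.sq_abs]
  have h4 : ‖Complex.exp (Complex.I*ξ) - Complex.exp (-(Complex.I*ξ))‖^2 ≤ 4 := by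
    nlinarith [norm_nonneg (Complex.exp (Complex.I*(ξ:ℂ)) - Complex.exp (-(Complex.I*(ξ:ℂ))))]
  have hξ2 : (0:ℝ) < ξ^2 := by positivity
  exact (div_le_div_iff_of_pos_right hξ2).mpr h4



def wt (m n : ℕ) : ℝ :=
  if |Real.log m - Real.log n| ≤ 2 then 8 else 8/(Real.log m - Real.log n)^2

lemma wt_nonneg (m n : ℕ) : 0 ≤ wt m n := by
  unfold wt; split <;> positivity

lemma wt_symm (m n : ℕ) : wt m n = wt n m := by
  unfold wt
  rw [abs_sub_comm, show (Real.log m - Real.log n)^2 = (Real.log n - Real.log m)^2 by ring]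

lemma wt_le_eight (m n : ℕ) : wt m n ≤ 8 := by
  unfold wt
  split
  · exact le_rfl
  · next h =>
    have h2 : 2 < |Real.log m - Real.log n| := not_le.mp h
    have h3 : 1 ≤ (Real.log m - Real.log n)^2 := by
      nlinarith [abs_nonneg (Real.log (m:ℝ) - Real.log (n:ℝ)), _root_.sq_abs (Real.log (m:ℝ) - Real.log (n:ℝ))]
    exact div_le_self (by norm_num) h3

lemma exp_two_lt : Real.exp 2 < 8 := by
  have h := Real.exp_one_lt_d9
  have h2 : Real.exp 2 = Real.exp 1 ^ 2 := by
    rw [← Real.exp_nat_mul]; norm_num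
  nlinarith [Real.exp_pos 1]

lemma log_ge_two_of_ge {x y : ℝ} (hy : 0 < y) (h : 8 * y ≤ x) : 2 ≤ Real.log x - Real.log y := by
  have hx : 0 < x := by nlinarith
  have : Real.log x - Real.log y = Real.log (x / y) := by
    rw [Real.log_div (ne_of_gt hx) (ne_of_gt hy)]
  rw [this]
  rw [Real.le_log_iff_exp_le (by positivity)]
  calc Real.exp 2 ≤ 8 := le_of_lt exp_two_lt
    _ ≤ x / y := by rw [le_div_iff₀ hy]; linarith

lemma log_ge_one_of_ge {x y : ℝ} (hy : 0 < y) (h : 4 * y ≤ x) : 1 ≤ Real.log x - Real.log y := by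
  have hx : 0 < x := by nlinarith
  have : Real.log x - Real.log y = Real.log (x / y) := by
    rw [Real.log_div (ne_of_gt hx) (ne_of_gt hy)]
  rw [this, Real.le_log_iff_exp_le (by positivity)]
  have := Real.exp_one_lt_d9
  calc Real.exp 1 ≤ 2.7182818286 := le_of_lt this
    _ ≤ 4 := by norm_num
    _ ≤ x / y := by rw [le_div_iff₀ hy]; linarith

-- log (m+1) - log m ≥ 1/(2m) for m ≥ 1 natural
lemma log_succ_sub_ge (m : ℕ) (hm : 1 ≤ m) : 1/(2*(m:ℝ)) ≤ Real.log (m+1) - Real.log m := by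
  have hm0 : (0:ℝ) < m := by exact_mod_cast hm
  have key : Real.log ((m:ℝ)/(m+1)) ≤ (m:ℝ)/(m+1) - 1 :=
    Real.log_le_sub_one_of_pos (by positivity)
  have hlog : Real.log ((m:ℝ)/(m+1)) = Real.log m - Real.log (m+1) := by
    rw [Real.log_div (ne_of_gt hm0) (by positivity)]
  rw [hlog] at key
  have h2 : (m:ℝ)/(m+1) - 1 = -(1/((m:ℝ)+1)) := by field_simp; ring
  rw [h2] at key
  have h3 : 1/((m:ℝ)+1) ≤ Real.log (m+1) - Real.log m := by linarith
  calc 1/(2*(m:ℝ)) ≤ 1/((m:ℝ)+1) := by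
        apply one_div_le_one_div_of_le (by positivity)
        have hm1 : (1:ℝ) ≤ m := by exact_mod_cast hm
        linarith
    _ ≤ _ := h3

lemma log_succ_sub_le (m : ℕ) (hm : 1 ≤ m) : Real.log (m+1) - Real.log m ≤ 1 := by
  have hm0 : (0:ℝ) < m := by exact_mod_cast hm
  have key : Real.log (((m:ℝ)+1)/m) ≤ ((m:ℝ)+1)/m - 1 :=
    Real.log_le_sub_one_of_pos (by positivity)
  have hlog : Real.log (((m:ℝ)+1)/m) = Real.log (m+1) - Real.log m := by
    rw [Real.log_div (by positivity) (ne_of_gt hm0)]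
  rw [hlog] at key
  have : ((m:ℝ)+1)/m - 1 = 1/m := by field_simp; ring
  rw [this] at key
  calc Real.log (m+1) - Real.log m ≤ 1/(m:ℝ) := key
    _ ≤ 1 := by rw [div_le_one hm0]; exact_mod_cast hm

lemma log_gt_two_of_ge {x y : ℝ} (hy : 0 < y) (h : 8 * y ≤ x) : 2 < Real.log x - Real.log y := by
  have hx : 0 < x := by nlinarith
  have hd : Real.log x - Real.log y = Real.log (x / y) := by
    rw [Real.log_div (ne_of_gt hx) (ne_of_gt hy)]
  rw [hd, Real.lt_log_iff_exp_lt (by positivity)]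
  calc Real.exp 2 < 8 := exp_two_lt
    _ ≤ x / y := by rw [le_div_iff₀ hy]; linarith

lemma sum_tel_up (a b : ℕ) (g : ℕ → ℝ) (hab : a ≤ b) :
    ∑ m ∈ Finset.Ioc a b, (g m - g (m+1)) = g (a+1) - g (b+1) := by
  have hIoc : Finset.Ioc a b = Finset.Ico (a+1) (b+1) := by
    ext x; simp [Finset.mem_Ioc, Finset.mem_Ico]
  rw [hIoc, Finset.sum_Ico_eq_sum_range]
  have h := Finset.sum_range_sub' (fun i => g (a+1+i)) (b+1-(a+1))
  calc ∑ i ∈ Finset.range (b+1-(a+1)), (g (a+1+i) - g (a+1+i+1))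
      = ∑ i ∈ Finset.range (b+1-(a+1)), ((fun i => g (a+1+i)) i - (fun i => g (a+1+i)) (i+1)) := by
        apply Finset.sum_congr rfl; intro i _; simp [Nat.add_assoc]
    _ = g (a+1+0) - g (a+1+(b+1-(a+1))) := h
    _ = g (a+1) - g (b+1) := by
        have e1 : a+1+0 = a+1 := by omega
        have e2 : a+1+(b+1-(a+1)) = b+1 := by omega
        rw [e1, e2]

lemma sum_tel_down (b : ℕ) (g : ℕ → ℝ) :
    ∑ m ∈ Finset.Ioc 0 b, (g (m+1) - g m) = g (b+1) - g 1 := by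
  have hIoc : Finset.Ioc 0 b = Finset.Ico 1 (b+1) := by
    ext x; simp [Finset.mem_Ioc, Finset.mem_Ico]; omega
  rw [hIoc, Finset.sum_Ico_eq_sum_range]
  have h := Finset.sum_range_sub (fun i => g (1+i)) (b+1-1)
  calc ∑ i ∈ Finset.range (b+1-1), (g (1+i+1) - g (1+i))
      = ∑ i ∈ Finset.range (b+1-1), ((fun i => g (1+i)) (i+1) - (fun i => g (1+i)) i) := by
        apply Finset.sum_congr rfl; intro i _; simp [Nat.add_assoc]
    _ = g (1+(b+1-1)) - g (1+0) := h
    _ = g (b+1) - g 1 := by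
        have e1 : 1+(b+1-1) = b+1 := by omega
        have e2 : 1+0 = 1 := by omega
        rw [e1, e2]

lemma sumS (N n : ℕ) (hn : 1 ≤ n) : ∑ m ∈ Finset.Icc 1 N, wt m n / m ≤ 540 := by
  have hnn : (0:ℝ) < n := by exact_mod_cast hn
  set q := n/8 with hq
  set p := 8*n with hp
  set M := max N p with hM
  have fnonneg : ∀ m : ℕ, 0 ≤ wt m n / (m:ℝ) :=
    fun m => div_nonneg (wt_nonneg m n) (Nat.cast_nonneg m)
  have hsub : Finset.Icc 1 N ⊆ Finset.Ioc 0 M := by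
    intro m hm; simp only [Finset.mem_Icc, Finset.mem_Ioc] at *
    exact ⟨by omega, le_trans hm.2 (le_max_left _ _)⟩
  have h1 : ∑ m ∈ Finset.Icc 1 N, wt m n / m ≤ ∑ m ∈ Finset.Ioc 0 M, wt m n / m :=
    Finset.sum_le_sum_of_subset_of_nonneg hsub (fun m _ _ => fnonneg m)
  have hqp : q ≤ p := by omega
  have hpM : p ≤ M := le_max_right _ _
  have hsplit1 : (∑ m ∈ Finset.Ioc 0 q, wt m n / (m:ℝ)) + (∑ m ∈ Finset.Ioc q p, wt m n / m)
      = ∑ m ∈ Finset.Ioc 0 p, wt m n / m :=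
    Finset.sum_Ioc_consecutive _ (Nat.zero_le q) hqp
  have hsplit2 : (∑ m ∈ Finset.Ioc 0 p, wt m n / (m:ℝ)) + (∑ m ∈ Finset.Ioc p M, wt m n / m)
      = ∑ m ∈ Finset.Ioc 0 M, wt m n / m :=
    Finset.sum_Ioc_consecutive _ (Nat.zero_le p) hpM
  -- middle
  have hmid : ∑ m ∈ Finset.Ioc q p, wt m n / (m:ℝ) ≤ 512 := by
    have hb : ∀ m ∈ Finset.Ioc q p, wt m n / (m:ℝ) ≤ 64/n := by
      intro m hm
      simp only [Finset.mem_Ioc] at hm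
      have hm1 : 1 ≤ m := by omega
      have hmr : (0:ℝ) < m := by exact_mod_cast hm1
      have hn8m : (n:ℝ) ≤ 8*m := by exact_mod_cast (by omega : n ≤ 8*m)
      calc wt m n / (m:ℝ) ≤ 8 / m := by
            gcongr
            exact wt_le_eight m n
        _ ≤ 64/n := by rw [div_le_div_iff₀ hmr hnn]; nlinarith
    calc ∑ m ∈ Finset.Ioc q p, wt m n / (m:ℝ)
        ≤ (Finset.Ioc q p).card • (64/(n:ℝ)) := Finset.sum_le_card_nsmul _ _ _ hb
      _ = ((p - q : ℕ) : ℝ) * (64/n) := by rw [Nat.card_Ioc, nsmul_eq_mul]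
      _ ≤ (8*(n:ℝ)) * (64/n) := by
          apply mul_le_mul_of_nonneg_right ?_ (by positivity)
          calc ((p - q : ℕ) : ℝ) ≤ ((8*n : ℕ) : ℝ) := by exact_mod_cast (by omega : p - q ≤ 8*n)
            _ = 8*(n:ℝ) := by push_cast; ring
      _ = 512 := by field_simp; ring
  -- upper
  have hup : ∑ m ∈ Finset.Ioc p M, wt m n / (m:ℝ) ≤ 12 := by
    set g : ℕ → ℝ := fun m => 1/(Real.log m - Real.log n) with hg
    have key : ∀ m ∈ Finset.Ioc p M, wt m n / (m:ℝ) ≤ 24*(g m - g (m+1)) := by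
      intro m hm
      simp only [Finset.mem_Ioc] at hm
      have hm8 : 8*n ≤ m := by omega
      have hm1 : 1 ≤ m := by omega
      have hmr : (1:ℝ) ≤ m := by exact_mod_cast hm1
      have hmr0 : (0:ℝ) < m := by linarith
      set L : ℝ := Real.log m - Real.log n with hL
      set L' : ℝ := Real.log (m+1:ℕ) - Real.log n with hL'
      have hcast : ((m+1:ℕ):ℝ) = (m:ℝ)+1 := by push_cast; ring
      have hm8r : 8*(n:ℝ) ≤ m := by exact_mod_cast hm8
      have hL2 : 2 < L := log_gt_two_of_ge hnn hm8r
      have hL'2 : 2 < L' := by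
        rw [hL', hcast]
        exact log_gt_two_of_ge hnn (by linarith)
      have hdiff_lo : 1/(2*(m:ℝ)) ≤ Real.log ((m:ℝ)+1) - Real.log m := log_succ_sub_ge m hm1
      have hdiff_hi : Real.log ((m:ℝ)+1) - Real.log m ≤ 1 := log_succ_sub_le m hm1
      have hLL' : L' - L = Real.log ((m:ℝ)+1) - Real.log m := by rw [hL', hL, hcast]; ring
      have hL'leL : L' ≤ (3/2)*L := by
        have hd2 : L' - L ≤ 1 := by rw [hLL']; exact hdiff_hi
        linarith
      have hDlo : 1/(2*(m:ℝ)) ≤ L' - L := by rw [hLL']; exact hdiff_lo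
      have hpos2m : (0:ℝ) < 1/(2*(m:ℝ)) := by positivity
      have hLleL' : L ≤ L' := by linarith
      have hwt : wt m n = 8/L^2 := by
        rw [wt, if_neg]
        rw [not_le]
        calc (2:ℝ) < L := hL2
          _ ≤ |Real.log m - Real.log n| := le_abs_self _
      have hgd : g m - g (m+1) = (L' - L)/(L*L') := by
        rw [hg]
        simp only
        rw [← hL, ← hL']
        field_simp
      rw [hwt, hgd]
      have hD : 1 ≤ 2*(m:ℝ)*(L' - L) := by
        have := (div_le_iff₀ (by positivity : (0:ℝ) < 2*(m:ℝ))).mp hDlo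
        linarith
      have hL0 : (0:ℝ) < L := by linarith
      have hL'0 : (0:ℝ) < L' := by linarith
      rw [div_div, show (24:ℝ)*((L'-L)/(L*L')) = (24*(L'-L))/(L*L') by ring,
        div_le_div_iff₀ (by positivity) (by positivity)]
      nlinarith [mul_nonneg (by linarith : (0:ℝ) ≤ 2*(m:ℝ)*(L'-L) - 1) (sq_nonneg L),
        mul_nonneg (le_of_lt hL0) (by linarith : (0:ℝ) ≤ 3*L - 2*L')]
    have tel := sum_tel_up p M (fun m => g m) hpM
    have hsum : ∑ m ∈ Finset.Ioc p M, wt m n / (m:ℝ) ≤ 24 * (g (p+1) - g (M+1)) := by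
      calc ∑ m ∈ Finset.Ioc p M, wt m n / (m:ℝ) ≤ ∑ m ∈ Finset.Ioc p M, 24*(g m - g (m+1)) :=
            Finset.sum_le_sum key
        _ = 24 * ∑ m ∈ Finset.Ioc p M, (g m - g (m+1)) := by rw [Finset.mul_sum]
        _ = 24 * (g (p+1) - g (M+1)) := by rw [tel]
    have hgp : g (p+1) ≤ 1/2 := by
      have h2 : 2 < Real.log ((p+1:ℕ):ℝ) - Real.log n := by
        apply log_gt_two_of_ge hnn
        have hpr : ((p+1:ℕ):ℝ) = 8*(n:ℝ)+1 := by rw [hp]; push_cast; ring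
        rw [hpr]; linarith
      show 1/(Real.log ((p+1:ℕ):ℝ) - Real.log n) ≤ 1/2
      rw [div_le_div_iff₀ (by linarith) (by norm_num)]
      linarith
    have hgM : 0 ≤ g (M+1) := by
      show 0 ≤ 1/(Real.log ((M+1:ℕ):ℝ) - Real.log n)
      apply one_div_nonneg.mpr
      rw [sub_nonneg]
      apply Real.log_le_log hnn
      exact_mod_cast (by omega : n ≤ M+1)
    linarith
  -- lower
  have hlow : ∑ m ∈ Finset.Ioc 0 q, wt m n / (m:ℝ) ≤ 16 := by
    rcases Nat.eq_zero_or_pos q with hq0 | hq1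
    · rw [hq0]
      simp
    · have hn8 : 8 ≤ n := by omega
      set g : ℕ → ℝ := fun m => 1/(Real.log n - Real.log m) with hg
      have key : ∀ m ∈ Finset.Ioc 0 q, wt m n / (m:ℝ) ≤ 16*(g (m+1) - g m) := by
        intro m hm
        simp only [Finset.mem_Ioc] at hm
        have hm1 : 1 ≤ m := hm.1
        have hmr : (1:ℝ) ≤ m := by exact_mod_cast hm1
        have hmr0 : (0:ℝ) < m := by linarith
        set L : ℝ := Real.log n - Real.log m with hL
        set L' : ℝ := Real.log n - Real.log (m+1:ℕ) with hL'
        have hcast : ((m+1:ℕ):ℝ) = (m:ℝ)+1 := by push_cast; ring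
        have h8m : 8*m ≤ n := by omega
        have hL2 : 2 < L := log_gt_two_of_ge hmr0 (by exact_mod_cast h8m)
        have h4m1 : 4*(m+1) ≤ n := by omega
        have hL'1 : 1 ≤ L' := by
          rw [hL', hcast]
          apply log_ge_one_of_ge (by positivity)
          exact_mod_cast h4m1
        have hdiff_lo : 1/(2*(m:ℝ)) ≤ Real.log ((m:ℝ)+1) - Real.log m := log_succ_sub_ge m hm1
        have hLL' : L - L' = Real.log ((m:ℝ)+1) - Real.log m := by rw [hL', hL, hcast]; ring
        have hDlo : 1/(2*(m:ℝ)) ≤ L - L' := by rw [hLL']; exact hdiff_lo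
        have hpos2m : (0:ℝ) < 1/(2*(m:ℝ)) := by positivity
        have hL'leL : L' ≤ L := by linarith
        have hwt : wt m n = 8/L^2 := by
          have hne : ¬ |Real.log (m:ℝ) - Real.log (n:ℝ)| ≤ 2 := by
            rw [not_le, abs_sub_comm]
            calc (2:ℝ) < L := hL2
              _ ≤ |Real.log (n:ℝ) - Real.log (m:ℝ)| := by rw [hL]; exact le_abs_self _
          rw [wt, if_neg hne, hL]
          ring_nf
        have hgd : g (m+1) - g m = (L - L')/(L*L') := by
          have hL0 : L ≠ 0 := by linarith
          have hL'0 : L' ≠ 0 := by linarith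
          rw [hg]
          simp only
          rw [← hL, ← hL']
          rw [div_sub_div 1 1 hL'0 hL0, one_mul, mul_one, mul_comm L' L]
        rw [hwt, hgd]
        have hD : 1 ≤ 2*(m:ℝ)*(L - L') := by
          have := (div_le_iff₀ (by positivity : (0:ℝ) < 2*(m:ℝ))).mp hDlo
          linarith
        have hL0 : (0:ℝ) < L := by linarith
        have hL'0 : (0:ℝ) < L' := by linarith
        rw [div_div, show (16:ℝ)*((L-L')/(L*L')) = (16*(L-L'))/(L*L') by ring,
          div_le_div_iff₀ (by positivity) (by positivity)]
        nlinarith [mul_nonneg (by linarith : (0:ℝ) ≤ 2*(m:ℝ)*(L-L') - 1) (sq_nonneg L),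
          mul_nonneg (le_of_lt hL0) (by linarith : (0:ℝ) ≤ L - L')]
      have tel := sum_tel_down q (fun m => g m)
      have hsum : ∑ m ∈ Finset.Ioc 0 q, wt m n / (m:ℝ) ≤ 16 * (g (q+1) - g 1) := by
        calc ∑ m ∈ Finset.Ioc 0 q, wt m n / (m:ℝ) ≤ ∑ m ∈ Finset.Ioc 0 q, 16*(g (m+1) - g m) :=
              Finset.sum_le_sum key
          _ = 16 * ∑ m ∈ Finset.Ioc 0 q, (g (m+1) - g m) := by rw [Finset.mul_sum]
          _ = 16 * (g (q+1) - g 1) := by rw [tel]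
      have hgq : g (q+1) ≤ 1 := by
        show 1/(Real.log n - Real.log ((q+1:ℕ):ℝ)) ≤ 1
        have h1 : 1 ≤ Real.log n - Real.log ((q+1:ℕ):ℝ) := by
          apply log_ge_one_of_ge (by positivity)
          exact_mod_cast (by omega : 4*(q+1) ≤ n)
        rw [div_le_one (by linarith)]
        linarith
      have hg1 : 0 ≤ g 1 := by
        show 0 ≤ 1/(Real.log (n:ℝ) - Real.log ((1:ℕ):ℝ))
        apply one_div_nonneg.mpr
        rw [sub_nonneg]
        simpa using Real.log_natCast_nonneg n
      linarith
  linarith [hsplit1, hsplit2, h1]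



lemma ker_le_wt (m n : ℕ) : ‖ker (Real.log n - Real.log m)‖ ≤ wt m n := by
  by_cases h : |Real.log (m:ℝ) - Real.log (n:ℝ)| ≤ 2
  · rw [wt, if_pos h]; exact ker_norm_le_eight _
  · rw [wt, if_neg h]
    have hξ : Real.log (n:ℝ) - Real.log (m:ℝ) ≠ 0 := by
      intro h0
      apply h
      rw [show Real.log (m:ℝ) - Real.log (n:ℝ) = -(Real.log (n:ℝ) - Real.log (m:ℝ)) by ring, h0]
      simp
    have hc : 0 < (Real.log (n:ℝ) - Real.log (m:ℝ))^2 :=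
      lt_of_le_of_ne (sq_nonneg _) (Ne.symm (pow_ne_zero 2 hξ))
    calc ‖ker (Real.log (n:ℝ) - Real.log (m:ℝ))‖ ≤ 4/(Real.log (n:ℝ) - Real.log (m:ℝ))^2 :=
          ker_norm_le_decay _ hξ
      _ ≤ 8/(Real.log (n:ℝ) - Real.log (m:ℝ))^2 := by
          apply (div_le_div_iff_of_pos_right hc).mpr; norm_num
      _ = 8/(Real.log (m:ℝ) - Real.log (n:ℝ))^2 := by ring_nf

lemma shiftker (c ξ : ℝ) :
    (∫ t in (c-2)..(c+2), ((2 - |t - c| : ℝ) : ℂ) * Complex.exp (Complex.I * ξ * t))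
      = Complex.exp (Complex.I * ξ * c) * ker ξ := by
  have h := intervalIntegral.integral_comp_add_right (a := (-2:ℝ)) (b := 2)
    (fun t : ℝ => ((2 - |t - c| : ℝ) : ℂ) * Complex.exp (Complex.I * ξ * t)) c
  rw [show (-2:ℝ)+c = c-2 by ring, show (2:ℝ)+c = c+2 by ring] at h
  rw [← h, ker, ← intervalIntegral.integral_const_mul]
  apply intervalIntegral.integral_congr
  intro u _
  show ((2 - |u + c - c| : ℝ) : ℂ) * Complex.exp (Complex.I * ξ * ((u + c : ℝ):ℂ))
      = Complex.exp (Complex.I * ξ * c) * (((2 - |u| : ℝ) : ℂ) * Complex.exp (Complex.I * ξ * u))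
  rw [show u + c - c = u from by ring]
  rw [show ((u + c : ℝ):ℂ) = (u:ℂ) + (c:ℂ) from by push_cast; ring]
  rw [show Complex.I * ξ * ((u:ℂ) + (c:ℂ)) = Complex.I * ξ * u + Complex.I * ξ * c from by ring,
    Complex.exp_add]
  ring

lemma conj_exponent (t : ℝ) :
    (starRingEnd ℂ) (-(1/2:ℂ) - Complex.I*(t:ℂ)) = -(1/2:ℂ) + Complex.I*(t:ℂ) := by
  simp [map_sub, map_neg, map_mul, Complex.conj_I, Complex.conj_ofReal, map_ofNat]

lemma pairpt (m n : ℕ) (hm : 1 ≤ m) (hn : 1 ≤ n) (t : ℝ) :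
    (m:ℂ)^(-(1/2:ℂ) - Complex.I*(t:ℂ)) * (starRingEnd ℂ) ((n:ℂ)^(-(1/2:ℂ) - Complex.I*(t:ℂ)))
      = (Real.exp (-(Real.log m + Real.log n)/2) : ℂ)
        * Complex.exp (Complex.I * ((Real.log n - Real.log m : ℝ):ℂ) * (t:ℂ)) := by
  have hm0 : (0:ℝ) < m := by exact_mod_cast hm
  have hn0 : (0:ℝ) < n := by exact_mod_cast hn
  have hmc : (m:ℂ) ≠ 0 := Nat.cast_ne_zero.mpr (by omega)
  have hnc : (n:ℂ) ≠ 0 := Nat.cast_ne_zero.mpr (by omega)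
  rw [Complex.cpow_def_of_ne_zero hmc, Complex.cpow_def_of_ne_zero hnc,
    ← Complex.exp_conj, ← Complex.exp_add, Complex.ofReal_exp, ← Complex.exp_add]
  congr 1
  rw [map_mul, conj_exponent]
  rw [show (m:ℂ) = ((m:ℝ):ℂ) from by norm_num, show (n:ℂ) = ((n:ℝ):ℂ) from by norm_num]
  rw [← Complex.ofReal_log (le_of_lt hm0), ← Complex.ofReal_log (le_of_lt hn0),
    Complex.conj_ofReal]
  push_cast
  ring

lemma pairint (c : ℝ) (m n : ℕ) (hm : 1 ≤ m) (hn : 1 ≤ n) :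
    ‖∫ t in (c-2)..(c+2), ((2 - |t - c| : ℝ) : ℂ) *
        ((m:ℂ)^(-(1/2:ℂ) - Complex.I*(t:ℂ)) * (starRingEnd ℂ) ((n:ℂ)^(-(1/2:ℂ) - Complex.I*(t:ℂ))))‖
      ≤ Real.exp (-(Real.log m + Real.log n)/2) * wt m n := by
  have h1 : ∀ t:ℝ, ((2 - |t - c| : ℝ) : ℂ) *
      ((m:ℂ)^(-(1/2:ℂ) - Complex.I*(t:ℂ)) * (starRingEnd ℂ) ((n:ℂ)^(-(1/2:ℂ) - Complex.I*(t:ℂ))))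
      = (Real.exp (-(Real.log m + Real.log n)/2) : ℂ)
        * (((2 - |t - c| : ℝ) : ℂ) * Complex.exp (Complex.I * ((Real.log n - Real.log m : ℝ):ℂ) * (t:ℂ))) := by
    intro t
    rw [pairpt m n hm hn t]
    ring
  rw [intervalIntegral.integral_congr (fun t _ => h1 t),
    intervalIntegral.integral_const_mul, shiftker c (Real.log n - Real.log m)]
  rw [norm_mul, norm_mul, Complex.norm_real, Real.norm_eq_abs,
    abs_of_pos (Real.exp_pos _)]
  rw [norm_exp_I_mul _ c, one_mul]
  exact mul_le_mul_of_nonneg_left (ker_le_wt m n) (le_of_lt (Real.exp_pos _))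

theorem stmt6 : ∃ C : ℝ, 0 < C ∧ ∀ (N : ℕ) (a : ℕ → ℂ) (τ : ℝ),
    (∫ t in τ..(τ + 1),
      ‖∑ n ∈ Finset.Icc 1 N, a n * (n : ℂ) ^ (-(1/2 : ℂ) - Complex.I * (t : ℂ))‖ ^ 2) ≤
    C * ∑ n ∈ Finset.Icc 1 N, ‖a n‖ ^ 2 := by
  refine ⟨540, by norm_num, ?_⟩
  intro N a τ
  set c : ℝ := τ + 1/2 with hc
  set P : ℝ → ℂ := fun t => ∑ n ∈ Finset.Icc 1 N, a n * (n:ℂ)^(-(1/2:ℂ) - Complex.I * (t:ℂ)) with hP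
  have contS : ∀ n : ℕ, 1 ≤ n → Continuous (fun t : ℝ => (n:ℂ)^(-(1/2:ℂ) - Complex.I * (t:ℂ))) := by
    intro n hn
    have hn0 : (n:ℂ) ≠ 0 := Nat.cast_ne_zero.mpr (by omega)
    apply Continuous.const_cpow ?_ (Or.inl hn0)
    continuity
  have contP : Continuous P := by
    apply continuous_finset_sum
    intro n hn
    exact continuous_const.mul (contS n (Finset.mem_Icc.mp hn).1)
  have contPsq : Continuous (fun t => ‖P t‖^2) := (contP.norm.pow 2)
  have contΦ : Continuous (fun t : ℝ => 2 - |t - c|) := by continuity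
  have contF : Continuous (fun t => ((2 - |t - c| : ℝ):ℂ) * (P t * (starRingEnd ℂ) (P t))) :=
    (Complex.continuous_ofReal.comp contΦ).mul (contP.mul (Complex.continuous_conj.comp contP))
  have contG : ∀ m : ℕ, 1 ≤ m → ∀ n : ℕ, 1 ≤ n → Continuous (fun t : ℝ =>
      ((2 - |t - c| : ℝ):ℂ) * ((m:ℂ)^(-(1/2:ℂ) - Complex.I*(t:ℂ)) *
        (starRingEnd ℂ) ((n:ℂ)^(-(1/2:ℂ) - Complex.I*(t:ℂ))))) := by
    intro m hm n hn
    exact (Complex.continuous_ofReal.comp contΦ).mul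
      ((contS m hm).mul (Complex.continuous_conj.comp (contS n hn)))
  -- Step A
  have stepA : (∫ t in τ..(τ+1), ‖P t‖^2) ≤ ∫ t in (c-2)..(c+2), (2 - |t - c|) * ‖P t‖^2 := by
    have hA1 : (∫ t in τ..(τ+1), ‖P t‖^2) ≤ ∫ t in τ..(τ+1), (2 - |t - c|) * ‖P t‖^2 := by
      apply intervalIntegral.integral_mono_on (by linarith)
        (contPsq.intervalIntegrable _ _) ((contΦ.mul contPsq).intervalIntegrable _ _)
      intro t ht
      rw [Set.mem_Icc] at ht
      have habs : |t - c| ≤ 1/2 := by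
        rw [abs_le, hc]
        constructor <;> [linarith [ht.1]; linarith [ht.2]]
      simp only [Pi.mul_apply]
      nlinarith [sq_nonneg ‖P t‖]
    have hA2 : (∫ t in τ..(τ+1), (2 - |t - c|) * ‖P t‖^2)
        ≤ ∫ t in (c-2)..(c+2), (2 - |t - c|) * ‖P t‖^2 := by
      refine intervalIntegral.integral_mono_interval ?_ ?_ ?_ ?_
        ((contΦ.mul contPsq).intervalIntegrable _ _)
      · rw [hc]; linarith
      · linarith
      · rw [hc]; linarith
      filter_upwards [ae_restrict_mem measurableSet_Ioc] with t ht
      rw [Set.mem_Ioc] at ht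
      have habs : |t - c| ≤ 2 := by rw [abs_le]; constructor <;> [linarith [ht.1]; linarith [ht.2]]
      simp only [Pi.zero_apply]
      nlinarith [sq_nonneg ‖P t‖]
    linarith
  -- Step B
  have hre : ∀ t : ℝ, (2 - |t - c|) * ‖P t‖^2
      = (((2 - |t - c| : ℝ):ℂ) * (P t * (starRingEnd ℂ) (P t))).re := by
    intro t
    rw [Complex.mul_conj, ← Complex.ofReal_mul, Complex.ofReal_re,
      Complex.normSq_eq_norm_sq]
  have stepB : (∫ t in (c-2)..(c+2), (2 - |t - c|) * ‖P t‖^2)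
      ≤ ‖∫ t in (c-2)..(c+2), ((2 - |t - c| : ℝ):ℂ) * (P t * (starRingEnd ℂ) (P t))‖ := by
    rw [intervalIntegral.integral_congr (fun t _ => hre t)]
    have hcomm := Complex.reCLM.intervalIntegral_comp_comm
      (contF.intervalIntegrable (μ := MeasureTheory.volume) (c-2) (c+2))
    have : (∫ t in (c-2)..(c+2), (((2 - |t - c| : ℝ):ℂ) * (P t * (starRingEnd ℂ) (P t))).re)
        = (∫ t in (c-2)..(c+2), ((2 - |t - c| : ℝ):ℂ) * (P t * (starRingEnd ℂ) (P t))).re := hcomm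
    rw [this]
    exact Complex.re_le_norm _
  -- Step C : expansion
  have hexpand : ∀ t : ℝ, ((2 - |t - c| : ℝ):ℂ) * (P t * (starRingEnd ℂ) (P t))
      = ∑ m ∈ Finset.Icc 1 N, ∑ n ∈ Finset.Icc 1 N, (a m * (starRingEnd ℂ) (a n)) *
          (((2 - |t - c| : ℝ):ℂ) * ((m:ℂ)^(-(1/2:ℂ) - Complex.I*(t:ℂ)) *
            (starRingEnd ℂ) ((n:ℂ)^(-(1/2:ℂ) - Complex.I*(t:ℂ))))) := by
    intro t
    rw [hP]
    simp only
    rw [map_sum (starRingEnd ℂ), Finset.sum_mul_sum, Finset.mul_sum]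
    apply Finset.sum_congr rfl; intro m _
    rw [Finset.mul_sum]
    apply Finset.sum_congr rfl; intro n _
    rw [map_mul]
    ring
  have hIeq : (∫ t in (c-2)..(c+2), ((2 - |t - c| : ℝ):ℂ) * (P t * (starRingEnd ℂ) (P t)))
      = ∑ m ∈ Finset.Icc 1 N, ∑ n ∈ Finset.Icc 1 N, (a m * (starRingEnd ℂ) (a n)) *
          ∫ t in (c-2)..(c+2), ((2 - |t - c| : ℝ):ℂ) * ((m:ℂ)^(-(1/2:ℂ) - Complex.I*(t:ℂ)) *
            (starRingEnd ℂ) ((n:ℂ)^(-(1/2:ℂ) - Complex.I*(t:ℂ)))) := by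
    rw [intervalIntegral.integral_congr (fun t _ => hexpand t)]
    rw [intervalIntegral.integral_finset_sum]
    · apply Finset.sum_congr rfl; intro m hm
      rw [intervalIntegral.integral_finset_sum]
      · apply Finset.sum_congr rfl; intro n hn
        exact intervalIntegral.integral_const_mul _ _
      · intro n hn
        exact (continuous_const.mul (contG m (Finset.mem_Icc.mp hm).1 n
          (Finset.mem_Icc.mp hn).1)).intervalIntegrable _ _
    · intro m hm
      exact (continuous_finset_sum _ (fun n hn => continuous_const.mul
        (contG m (Finset.mem_Icc.mp hm).1 n (Finset.mem_Icc.mp hn).1))).intervalIntegrable _ _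
  -- Step C: norm bound
  have stepC : ‖∫ t in (c-2)..(c+2), ((2 - |t - c| : ℝ):ℂ) * (P t * (starRingEnd ℂ) (P t))‖
      ≤ ∑ m ∈ Finset.Icc 1 N, ∑ n ∈ Finset.Icc 1 N,
          ‖a m‖ * ‖a n‖ * (Real.exp (-(Real.log m + Real.log n)/2) * wt m n) := by
    rw [hIeq]
    calc ‖∑ m ∈ Finset.Icc 1 N, ∑ n ∈ Finset.Icc 1 N, (a m * (starRingEnd ℂ) (a n)) *
          ∫ t in (c-2)..(c+2), ((2 - |t - c| : ℝ):ℂ) * ((m:ℂ)^(-(1/2:ℂ) - Complex.I*(t:ℂ)) *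
            (starRingEnd ℂ) ((n:ℂ)^(-(1/2:ℂ) - Complex.I*(t:ℂ))))‖
        ≤ ∑ m ∈ Finset.Icc 1 N, ‖∑ n ∈ Finset.Icc 1 N, (a m * (starRingEnd ℂ) (a n)) *
          ∫ t in (c-2)..(c+2), ((2 - |t - c| : ℝ):ℂ) * ((m:ℂ)^(-(1/2:ℂ) - Complex.I*(t:ℂ)) *
            (starRingEnd ℂ) ((n:ℂ)^(-(1/2:ℂ) - Complex.I*(t:ℂ))))‖ := norm_sum_le _ _
      _ ≤ ∑ m ∈ Finset.Icc 1 N, ∑ n ∈ Finset.Icc 1 N, ‖(a m * (starRingEnd ℂ) (a n)) *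
          ∫ t in (c-2)..(c+2), ((2 - |t - c| : ℝ):ℂ) * ((m:ℂ)^(-(1/2:ℂ) - Complex.I*(t:ℂ)) *
            (starRingEnd ℂ) ((n:ℂ)^(-(1/2:ℂ) - Complex.I*(t:ℂ))))‖ :=
          Finset.sum_le_sum (fun m _ => norm_sum_le _ _)
      _ ≤ ∑ m ∈ Finset.Icc 1 N, ∑ n ∈ Finset.Icc 1 N,
          ‖a m‖ * ‖a n‖ * (Real.exp (-(Real.log m + Real.log n)/2) * wt m n) := by
          apply Finset.sum_le_sum
          intro m hm
          apply Finset.sum_le_sum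
          intro n hn
          rw [norm_mul, norm_mul, RCLike.norm_conj]
          exact mul_le_mul_of_nonneg_left
            (pairint c m n (Finset.mem_Icc.mp hm).1 (Finset.mem_Icc.mp hn).1)
            (by positivity)
  -- Step D: arithmetic
  have expneg : ∀ k : ℕ, 1 ≤ k → Real.exp (-(Real.log k)) = 1/(k:ℝ) := by
    intro k hk
    have hk0 : (0:ℝ) < k := by exact_mod_cast hk
    rw [Real.exp_neg, Real.exp_log hk0, one_div]
  have pairD : ∀ m ∈ Finset.Icc 1 N, ∀ n ∈ Finset.Icc 1 N,
      ‖a m‖ * ‖a n‖ * (Real.exp (-(Real.log m + Real.log n)/2) * wt m n)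
        ≤ (‖a m‖^2 * (wt m n / n) + ‖a n‖^2 * (wt m n / m))/2 := by
    intro m hm n hn
    have hm1 := (Finset.mem_Icc.mp hm).1
    have hn1 := (Finset.mem_Icc.mp hn).1
    have hmr : (0:ℝ) < m := by exact_mod_cast hm1
    have hnr : (0:ℝ) < n := by exact_mod_cast hn1
    have key : ‖a m‖ * ‖a n‖ * Real.exp (-(Real.log m + Real.log n)/2)
        ≤ (‖a m‖^2 / n + ‖a n‖^2 / m)/2 := by
      have h1 : Real.exp (-(Real.log m + Real.log n)/2)
          = Real.exp (-(Real.log m)/2) * Real.exp (-(Real.log n)/2) := by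
        rw [← Real.exp_add]; ring_nf
      have h2 : Real.exp (-(Real.log (m:ℝ))/2)^2 = 1/(m:ℝ) := by
        rw [sq, ← Real.exp_add, show -(Real.log (m:ℝ))/2 + -(Real.log (m:ℝ))/2
          = -(Real.log (m:ℝ)) by ring, expneg m hm1]
      have h3 : Real.exp (-(Real.log (n:ℝ))/2)^2 = 1/(n:ℝ) := by
        rw [sq, ← Real.exp_add, show -(Real.log (n:ℝ))/2 + -(Real.log (n:ℝ))/2
          = -(Real.log (n:ℝ)) by ring, expneg n hn1]
      rw [h1]
      have hd1 : ‖a m‖^2/(n:ℝ) = ‖a m‖^2 * Real.exp (-Real.log (n:ℝ)/2)^2 := by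
        rw [h3]; ring
      have hd2 : ‖a n‖^2/(m:ℝ) = ‖a n‖^2 * Real.exp (-Real.log (m:ℝ)/2)^2 := by
        rw [h2]; ring
      rw [hd1, hd2]
      nlinarith [sq_nonneg (‖a m‖ * Real.exp (-Real.log (n:ℝ)/2)
          - ‖a n‖ * Real.exp (-Real.log (m:ℝ)/2)),
        Real.exp_pos (-Real.log (m:ℝ)/2), Real.exp_pos (-Real.log (n:ℝ)/2),
        norm_nonneg (a m), norm_nonneg (a n)]
    calc ‖a m‖ * ‖a n‖ * (Real.exp (-(Real.log m + Real.log n)/2) * wt m n)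
        = (‖a m‖ * ‖a n‖ * Real.exp (-(Real.log m + Real.log n)/2)) * wt m n := by ring
      _ ≤ (‖a m‖^2 / n + ‖a n‖^2 / m)/2 * wt m n :=
          mul_le_mul_of_nonneg_right key (wt_nonneg m n)
      _ = (‖a m‖^2 * (wt m n / n) + ‖a n‖^2 * (wt m n / m))/2 := by ring
  have T1 : ∑ m ∈ Finset.Icc 1 N, ∑ n ∈ Finset.Icc 1 N, ‖a m‖^2 * (wt m n / n)
      ≤ 540 * ∑ k ∈ Finset.Icc 1 N, ‖a k‖^2 := by
    have inner : ∀ m ∈ Finset.Icc 1 N, ∑ n ∈ Finset.Icc 1 N, ‖a m‖^2 * (wt m n / n)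
        ≤ ‖a m‖^2 * 540 := by
      intro m hm
      rw [← Finset.mul_sum]
      apply mul_le_mul_of_nonneg_left ?_ (by positivity)
      have : ∑ n ∈ Finset.Icc 1 N, wt m n / (n:ℝ) = ∑ n ∈ Finset.Icc 1 N, wt n m / (n:ℝ) :=
        Finset.sum_congr rfl (fun n _ => by rw [wt_symm])
      rw [this]
      exact sumS N m (Finset.mem_Icc.mp hm).1
    calc ∑ m ∈ Finset.Icc 1 N, ∑ n ∈ Finset.Icc 1 N, ‖a m‖^2 * (wt m n / n)
        ≤ ∑ m ∈ Finset.Icc 1 N, ‖a m‖^2 * 540 := Finset.sum_le_sum inner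
      _ = 540 * ∑ k ∈ Finset.Icc 1 N, ‖a k‖^2 := by rw [← Finset.sum_mul]; ring
  have T2 : ∑ m ∈ Finset.Icc 1 N, ∑ n ∈ Finset.Icc 1 N, ‖a n‖^2 * (wt m n / m)
      ≤ 540 * ∑ k ∈ Finset.Icc 1 N, ‖a k‖^2 := by
    rw [Finset.sum_comm]
    have inner : ∀ n ∈ Finset.Icc 1 N, ∑ m ∈ Finset.Icc 1 N, ‖a n‖^2 * (wt m n / m)
        ≤ ‖a n‖^2 * 540 := by
      intro n hn
      rw [← Finset.mul_sum]
      apply mul_le_mul_of_nonneg_left ?_ (by positivity)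
      exact sumS N n (Finset.mem_Icc.mp hn).1
    calc ∑ n ∈ Finset.Icc 1 N, ∑ m ∈ Finset.Icc 1 N, ‖a n‖^2 * (wt m n / m)
        ≤ ∑ n ∈ Finset.Icc 1 N, ‖a n‖^2 * 540 := Finset.sum_le_sum inner
      _ = 540 * ∑ k ∈ Finset.Icc 1 N, ‖a k‖^2 := by rw [← Finset.sum_mul]; ring
  have stepD : ∑ m ∈ Finset.Icc 1 N, ∑ n ∈ Finset.Icc 1 N,
      ‖a m‖ * ‖a n‖ * (Real.exp (-(Real.log m + Real.log n)/2) * wt m n)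
        ≤ 540 * ∑ k ∈ Finset.Icc 1 N, ‖a k‖^2 := by
    have h1 : ∑ m ∈ Finset.Icc 1 N, ∑ n ∈ Finset.Icc 1 N,
        ‖a m‖ * ‖a n‖ * (Real.exp (-(Real.log m + Real.log n)/2) * wt m n)
          ≤ ∑ m ∈ Finset.Icc 1 N, ∑ n ∈ Finset.Icc 1 N,
            (‖a m‖^2 * (wt m n / n) + ‖a n‖^2 * (wt m n / m))/2 :=
      Finset.sum_le_sum (fun m hm => Finset.sum_le_sum (fun n hn => pairD m hm n hn))
    have h2 : ∑ m ∈ Finset.Icc 1 N, ∑ n ∈ Finset.Icc 1 N,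
        (‖a m‖^2 * (wt m n / n) + ‖a n‖^2 * (wt m n / m))/2
          = ((∑ m ∈ Finset.Icc 1 N, ∑ n ∈ Finset.Icc 1 N, ‖a m‖^2 * (wt m n / n))
            + ∑ m ∈ Finset.Icc 1 N, ∑ n ∈ Finset.Icc 1 N, ‖a n‖^2 * (wt m n / m))/2 := by
      rw [← Finset.sum_add_distrib, Finset.sum_div]
      apply Finset.sum_congr rfl
      intro m _
      rw [← Finset.sum_add_distrib, Finset.sum_div]
    rw [h2] at h1
    calc ∑ m ∈ Finset.Icc 1 N, ∑ n ∈ Finset.Icc 1 N,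
        ‖a m‖ * ‖a n‖ * (Real.exp (-(Real.log m + Real.log n)/2) * wt m n) ≤ _ := h1
      _ ≤ (540 * ∑ k ∈ Finset.Icc 1 N, ‖a k‖^2 + 540 * ∑ k ∈ Finset.Icc 1 N, ‖a k‖^2)/2 := by
          linarith [T1, T2]
      _ = 540 * ∑ k ∈ Finset.Icc 1 N, ‖a k‖^2 := by ring
  linarith [stepA, stepB, stepC, stepD]

end
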